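/- Let n ≥ 1, let V and E be finite-dimensional real inner product spaces, and let A(D) be a homogeneous constant-coefficient linear differential operator of order k ≥ 1 from V to E on ℝⁿ which is injectively elliptic. Then there exists a homogeneous constant-coefficient linear differential operator L(D) (of some order m ≥ 1) from E to E on ℝⁿ such that for every ξ ∈ ℝⁿ \ {0} one has A(ξ)[V] = ker L(ξ), i.e., the range of the symbol A(ξ) : V → E equals the kernel of the symbol L(ξ) : E → E. -/

import Mathlib

open MeasureTheory

/-- The symmetric tensor `ξ^{⊗k} ⊗ v`, viewed as the continuous `k`-linear map
`(h₁, …, h_k) ↦ (ξ·h₁)⋯(ξ·h_k) v`, linearly in `v`. -/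
noncomputable def tensorPow {n : ℕ} (k : ℕ) {V : Type*} [NormedAddCommGroup V] [NormedSpace ℝ V]
    (ξ : EuclideanSpace ℝ (Fin n)) :
    V →ₗ[ℝ] ContinuousMultilinearMap ℝ (fun _ : Fin k => EuclideanSpace ℝ (Fin n)) V where
  toFun v := (ContinuousMultilinearMap.mkPiRing ℝ (Fin k) v).compContinuousLinearMap
      (fun _ => innerSL ℝ ξ)
  map_add' v w := by
    ext m
    simp only [ContinuousMultilinearMap.compContinuousLinearMap_apply,
      ContinuousMultilinearMap.mkPiRing_apply, ContinuousMultilinearMap.add_apply, smul_add]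
  map_smul' c v := by
    ext m
    simp only [ContinuousMultilinearMap.compContinuousLinearMap_apply,
      ContinuousMultilinearMap.mkPiRing_apply, ContinuousMultilinearMap.smul_apply,
      RingHom.id_apply]
    rw [smul_comm]

/-- The symbol `A(ξ) : V → E` of the homogeneous constant-coefficient differential operator
of order `k` given by the linear map `A` on symmetric `k`-linear maps:
`A(ξ)[v] = A[(h₁,…,h_k) ↦ (ξ·h₁)⋯(ξ·h_k) v]`. -/
noncomputable def symbol {n k : ℕ} {V E : Type*} [NormedAddCommGroup V] [NormedSpace ℝ V]
    [NormedAddCommGroup E] [NormedSpace ℝ E]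
    (A : ContinuousMultilinearMap ℝ (fun _ : Fin k => EuclideanSpace ℝ (Fin n)) V →ₗ[ℝ] E)
    (ξ : EuclideanSpace ℝ (Fin n)) : V →ₗ[ℝ] E :=
  A ∘ₗ tensorPow k ξ

/-- like `tensorPow` but with a separate vector in each slot -/
noncomputable def tensorFam {n k : ℕ} {V : Type*} [NormedAddCommGroup V] [NormedSpace ℝ V]
    (w : Fin k → EuclideanSpace ℝ (Fin n)) :
    V →ₗ[ℝ] ContinuousMultilinearMap ℝ (fun _ : Fin k => EuclideanSpace ℝ (Fin n)) V where
  toFun v := (ContinuousMultilinearMap.mkPiRing ℝ (Fin k) v).compContinuousLinearMap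
      (fun i => innerSL ℝ (w i))
  map_add' v w := by
    ext m
    simp only [ContinuousMultilinearMap.compContinuousLinearMap_apply,
      ContinuousMultilinearMap.mkPiRing_apply, ContinuousMultilinearMap.add_apply, smul_add]
  map_smul' c v := by
    ext m
    simp only [ContinuousMultilinearMap.compContinuousLinearMap_apply,
      ContinuousMultilinearMap.mkPiRing_apply, ContinuousMultilinearMap.smul_apply,
      RingHom.id_apply]
    rw [smul_comm]

noncomputable section PolyAux

/-- monomial function on ℝⁿ -/
def monoFn {n m : ℕ} (f : Fin m → Fin n) (ξ : EuclideanSpace ℝ (Fin n)) : ℝ :=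
  ∏ i, ξ (f i)

/-- span of `W`-valued homogeneous monomials of degree `m` -/
def Qp (n m : ℕ) (W : Type*) [AddCommGroup W] [Module ℝ W] :
    Submodule ℝ (EuclideanSpace ℝ (Fin n) → W) :=
  Submodule.span ℝ {g | ∃ (f : Fin m → Fin n) (c : W), g = fun ξ => monoFn f ξ • c}

variable {n : ℕ} {W W₁ W₂ W₃ : Type*} [AddCommGroup W] [Module ℝ W]
  [AddCommGroup W₁] [Module ℝ W₁] [AddCommGroup W₂] [Module ℝ W₂]
  [AddCommGroup W₃] [Module ℝ W₃]

lemma Qp_mono {m : ℕ} (f : Fin m → Fin n) (c : W) :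
    (fun ξ => monoFn f ξ • c) ∈ Qp n m W :=
  Submodule.subset_span ⟨f, c, rfl⟩

lemma Qp_const (c : W) : (fun _ : EuclideanSpace ℝ (Fin n) => c) ∈ Qp n 0 W := by
  have : (fun _ : EuclideanSpace ℝ (Fin n) => c)
      = fun ξ => monoFn (Fin.elim0 : Fin 0 → Fin n) ξ • c := by
    funext ξ; simp [monoFn]
  rw [this]; exact Qp_mono _ _

lemma monoFn_append {m₁ m₂ : ℕ} (f : Fin m₁ → Fin n) (g : Fin m₂ → Fin n)
    (ξ : EuclideanSpace ℝ (Fin n)) :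
    monoFn (Fin.append f g) ξ = monoFn f ξ * monoFn g ξ := by
  unfold monoFn
  rw [Fin.prod_univ_add]
  congr 1
  · exact Finset.prod_congr rfl fun i _ => by rw [Fin.append_left]
  · exact Finset.prod_congr rfl fun i _ => by rw [Fin.append_right]

lemma Qp_bilin {m₁ m₂ : ℕ} (B : W₁ →ₗ[ℝ] W₂ →ₗ[ℝ] W₃)
    {F : EuclideanSpace ℝ (Fin n) → W₁} {G : EuclideanSpace ℝ (Fin n) → W₂}
    (hF : F ∈ Qp n m₁ W₁) (hG : G ∈ Qp n m₂ W₂) :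
    (fun ξ => B (F ξ) (G ξ)) ∈ Qp n (m₁ + m₂) W₃ := by
  induction hF using Submodule.span_induction with
  | mem F hFm =>
    obtain ⟨f, c, rfl⟩ := hFm
    induction hG using Submodule.span_induction with
    | mem G hGm =>
      obtain ⟨g, c', rfl⟩ := hGm
      have : (fun ξ => B (monoFn f ξ • c) (monoFn g ξ • c'))
          = fun ξ => monoFn (Fin.append f g) ξ • B c c' := by
        funext ξ
        simp [monoFn_append, _root_.map_smul, mul_smul]
        exact smul_comm _ _ _
      rw [this]; exact Qp_mono _ _
    | zero =>
      convert Submodule.zero_mem (Qp n (m₁+m₂) W₃) using 1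
      funext ξ; simp
    | add x y hx hy ihx ihy =>
      have : (fun ξ => B (monoFn f ξ • c) ((x + y) ξ))
          = (fun ξ => B (monoFn f ξ • c) (x ξ)) + fun ξ => B (monoFn f ξ • c) (y ξ) := by
        funext ξ; simp
      rw [this]; exact Submodule.add_mem _ ihx ihy
    | smul a x hx ihx =>
      have : (fun ξ => B (monoFn f ξ • c) ((a • x) ξ))
          = a • fun ξ => B (monoFn f ξ • c) (x ξ) := by
        funext ξ; simp
      rw [this]; exact Submodule.smul_mem _ _ ihx
  | zero =>
    convert Submodule.zero_mem (Qp n (m₁+m₂) W₃) using 1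
    funext ξ; simp
  | add x y hx hy ihx ihy =>
    have : (fun ξ => B ((x + y) ξ) (G ξ))
        = (fun ξ => B (x ξ) (G ξ)) + fun ξ => B (y ξ) (G ξ) := by
      funext ξ; simp
    rw [this]; exact Submodule.add_mem _ ihx ihy
  | smul a x hx ihx =>
    have : (fun ξ => B ((a • x) ξ) (G ξ)) = a • fun ξ => B (x ξ) (G ξ) := by
      funext ξ; simp
    rw [this]; exact Submodule.smul_mem _ _ ihx

lemma Qp_map {m : ℕ} (L : W₁ →ₗ[ℝ] W₂) {F : EuclideanSpace ℝ (Fin n) → W₁}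
    (hF : F ∈ Qp n m W₁) : (fun ξ => L (F ξ)) ∈ Qp n m W₂ := by
  induction hF using Submodule.span_induction with
  | mem F hFm =>
    obtain ⟨f, c, rfl⟩ := hFm
    have : (fun ξ => L (monoFn f ξ • c)) = fun ξ => monoFn f ξ • L c := by
      funext ξ; simp
    rw [this]; exact Qp_mono _ _
  | zero =>
    convert Submodule.zero_mem (Qp n m W₂) using 1
    funext ξ; simp
  | add x y hx hy ihx ihy =>
    have : (fun ξ => L ((x + y) ξ)) = (fun ξ => L (x ξ)) + fun ξ => L (y ξ) := by
      funext ξ; simp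
    rw [this]; exact Submodule.add_mem _ ihx ihy
  | smul a x hx ihx =>
    have : (fun ξ => L ((a • x) ξ)) = a • fun ξ => L (x ξ) := by
      funext ξ; simp
    rw [this]; exact Submodule.smul_mem _ _ ihx

lemma Qp_smul {m₁ m₂ : ℕ} {p : EuclideanSpace ℝ (Fin n) → ℝ}
    {F : EuclideanSpace ℝ (Fin n) → W} (hp : p ∈ Qp n m₁ ℝ) (hF : F ∈ Qp n m₂ W) :
    (fun ξ => p ξ • F ξ) ∈ Qp n (m₁ + m₂) W :=
  Qp_bilin (LinearMap.lsmul ℝ W) hp hF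

lemma Qp_mul {m₁ m₂ : ℕ} {p q : EuclideanSpace ℝ (Fin n) → ℝ}
    (hp : p ∈ Qp n m₁ ℝ) (hq : q ∈ Qp n m₂ ℝ) :
    (fun ξ => p ξ * q ξ) ∈ Qp n (m₁ + m₂) ℝ :=
  Qp_bilin (LinearMap.mul ℝ ℝ) hp hq

lemma Qp_comp {m₁ m₂ : ℕ} {F : EuclideanSpace ℝ (Fin n) → (W₂ →ₗ[ℝ] W₃)}
    {G : EuclideanSpace ℝ (Fin n) → (W₁ →ₗ[ℝ] W₂)}
    (hF : F ∈ Qp n m₁ _) (hG : G ∈ Qp n m₂ _) :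
    (fun ξ => F ξ ∘ₗ G ξ) ∈ Qp n (m₁ + m₂) (W₁ →ₗ[ℝ] W₃) :=
  Qp_bilin (LinearMap.llcomp ℝ W₁ W₂ W₃) hF hG

lemma Qp_cast {m₁ m₂ : ℕ} (h : m₁ = m₂) {F : EuclideanSpace ℝ (Fin n) → W}
    (hF : F ∈ Qp n m₁ W) : F ∈ Qp n m₂ W := h ▸ hF

lemma Qp_prod {ι : Type*} [DecidableEq ι] (s : Finset ι)
    (g : ι → EuclideanSpace ℝ (Fin n) → ℝ) (μ : ι → ℕ)
    (h : ∀ i ∈ s, g i ∈ Qp n (μ i) ℝ) :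
    (fun ξ => ∏ i ∈ s, g i ξ) ∈ Qp n (∑ i ∈ s, μ i) ℝ := by
  induction s using Finset.induction_on with
  | empty => simpa using Qp_const (1 : ℝ)
  | insert a s hx ih =>
    simp only [Finset.prod_insert hx, Finset.sum_insert hx]
    exact Qp_mul (h a (Finset.mem_insert_self a s))
      (ih fun i hi => h i (Finset.mem_insert_of_mem hi))

end PolyAux

noncomputable section MainAux
open scoped InnerProductSpace

lemma tensorPow_mem {n k : ℕ} {V : Type*} [NormedAddCommGroup V] [NormedSpace ℝ V] :
    (fun ξ => tensorPow (n := n) k (V := V) ξ) ∈ Qp n k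
      (V →ₗ[ℝ] ContinuousMultilinearMap ℝ (fun _ : Fin k => EuclideanSpace ℝ (Fin n)) V) := by
  have key : (fun ξ => tensorPow (n := n) k (V := V) ξ)
      = ∑ f : Fin k → Fin n, fun ξ => monoFn f ξ •
          tensorFam (V := V) (fun i => EuclideanSpace.single (f i) (1:ℝ)) := by
    funext ξ
    rw [Finset.sum_apply]
    apply LinearMap.ext; intro v
    apply ContinuousMultilinearMap.ext; intro h
    simp only [LinearMap.coe_sum, Finset.sum_apply, LinearMap.smul_apply,
      ContinuousMultilinearMap.sum_apply, ContinuousMultilinearMap.smul_apply]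
    simp only [tensorPow, tensorFam, monoFn, LinearMap.coe_mk, AddHom.coe_mk,
      ContinuousMultilinearMap.compContinuousLinearMap_apply,
      ContinuousMultilinearMap.mkPiRing_apply, innerSL_apply_apply,
      EuclideanSpace.inner_single_left, PiLp.inner_apply, RCLike.inner_apply,
      starRingEnd_apply, star_trivial, one_mul]
    rw [Finset.prod_univ_sum, Fintype.piFinset_univ, Finset.sum_smul]
    refine Finset.sum_congr rfl fun f _ => by
      rw [Finset.prod_mul_distrib, mul_comm, mul_smul]
      congr 1
      refine congrArg (fun r : ℝ => r • v) (Finset.prod_congr rfl fun i _ => ?_)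
      simp [EuclideanSpace.single_apply]
  rw [key]
  exact Submodule.sum_mem _ fun f _ => Qp_mono _ _

lemma symbol_mem {n k : ℕ} {V E' : Type*} [NormedAddCommGroup V] [NormedSpace ℝ V]
    [NormedAddCommGroup E'] [NormedSpace ℝ E']
    (A : ContinuousMultilinearMap ℝ (fun _ : Fin k => EuclideanSpace ℝ (Fin n)) V →ₗ[ℝ] E') :
    (fun ξ => symbol A ξ) ∈ Qp n k (V →ₗ[ℝ] E') :=
  Qp_map (LinearMap.llcomp ℝ V _ E' A) tensorPow_mem

/-- evaluation of a continuous multilinear map at basis vectors, as a linear map -/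
def evalCMM {n m : ℕ} {E : Type*} [NormedAddCommGroup E] [NormedSpace ℝ E]
    (f : Fin m → Fin n) :
    ContinuousMultilinearMap ℝ (fun _ : Fin m => EuclideanSpace ℝ (Fin n)) E →ₗ[ℝ] E where
  toFun T := T fun i => EuclideanSpace.single (f i) 1
  map_add' _ _ := rfl
  map_smul' _ _ := rfl

lemma represent {n m : ℕ} {E : Type*} [NormedAddCommGroup E] [NormedSpace ℝ E]
    {Φ : EuclideanSpace ℝ (Fin n) → (E →ₗ[ℝ] E)} (hΦ : Φ ∈ Qp n m (E →ₗ[ℝ] E)) :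
    ∃ L : ContinuousMultilinearMap ℝ (fun _ : Fin m => EuclideanSpace ℝ (Fin n)) E →ₗ[ℝ] E,
      ∀ ξ, symbol L ξ = Φ ξ := by
  induction hΦ using Submodule.span_induction with
  | mem Φ hm =>
    obtain ⟨f, c, rfl⟩ := hm
    refine ⟨c ∘ₗ evalCMM f, fun ξ => ?_⟩
    apply LinearMap.ext; intro e
    simp only [symbol, evalCMM, LinearMap.comp_apply, LinearMap.coe_mk, AddHom.coe_mk,
      tensorPow, ContinuousMultilinearMap.compContinuousLinearMap_apply,
      ContinuousMultilinearMap.mkPiRing_apply, innerSL_apply_apply,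
      EuclideanSpace.inner_single_right, starRingEnd_apply, star_trivial, mul_one,
      _root_.map_smul, LinearMap.smul_apply, monoFn]
    simp
  | zero => exact ⟨0, fun ξ => by apply LinearMap.ext; intro e; simp [symbol]⟩
  | add x y hx hy ihx ihy =>
    obtain ⟨L₁, h₁⟩ := ihx; obtain ⟨L₂, h₂⟩ := ihy
    refine ⟨L₁ + L₂, fun ξ => ?_⟩
    rw [show symbol (L₁ + L₂) ξ = symbol L₁ ξ + symbol L₂ ξ from LinearMap.add_comp _ _ _,
      h₁, h₂]
    rfl
  | smul a x hx ihx =>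
    obtain ⟨L₁, h₁⟩ := ihx
    refine ⟨a • L₁, fun ξ => ?_⟩
    rw [show symbol (a • L₁) ξ = a • symbol L₁ ξ from LinearMap.smul_comp _ _ _, h₁]
    rfl

end MainAux

noncomputable section MainAux2

variable {n : ℕ} {W : Type*} [AddCommGroup W] [Module ℝ W]

lemma Qp_sum {ι : Type*} (s : Finset ι) (F : ι → EuclideanSpace ℝ (Fin n) → W) (m : ℕ)
    (h : ∀ i ∈ s, F i ∈ Qp n m W) : (fun ξ => ∑ i ∈ s, F i ξ) ∈ Qp n m W := by
  have : (fun ξ => ∑ i ∈ s, F i ξ) = ∑ i ∈ s, F i := by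
    funext ξ; rw [Finset.sum_apply]
  rw [this]; exact Submodule.sum_mem _ h

lemma Qp_sub {m : ℕ} {F G : EuclideanSpace ℝ (Fin n) → W} (hF : F ∈ Qp n m W)
    (hG : G ∈ Qp n m W) : (fun ξ => F ξ - G ξ) ∈ Qp n m W := by
  have : (fun ξ => F ξ - G ξ) = F - G := rfl
  rw [this]; exact Submodule.sub_mem _ hF hG

/-- the function `ξ ↦ ∑ j, ξ j * ξ j` -/
def nsqFn (n : ℕ) (ξ : EuclideanSpace ℝ (Fin n)) : ℝ := ∑ j, ξ j * ξ j

lemma nsqFn_mem : nsqFn n ∈ Qp n 2 ℝ := by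
  have : nsqFn n = fun ξ => ∑ j : Fin n, monoFn (fun _ : Fin 2 => j) ξ • (1:ℝ) := by
    funext ξ
    simp [nsqFn, monoFn, Fin.prod_univ_two, ← sq]
  rw [this]
  exact Qp_sum _ _ _ fun j _ => Qp_mono _ _

lemma nsqFn_ne_zero {ξ : EuclideanSpace ℝ (Fin n)} (hξ : ξ ≠ 0) : nsqFn n ξ ≠ 0 := by
  have : nsqFn n ξ = (inner ℝ ξ ξ : ℝ) := by
    simp only [nsqFn, PiLp.inner_apply, RCLike.inner_apply, conj_trivial]
  rw [this]
  exact fun h => hξ (inner_self_eq_zero.mp h)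

/-- adjoint as an ℝ-linear map -/
def adjLM {V E : Type*} [NormedAddCommGroup V] [InnerProductSpace ℝ V] [FiniteDimensional ℝ V]
    [NormedAddCommGroup E] [InnerProductSpace ℝ E] [FiniteDimensional ℝ E] :
    (V →ₗ[ℝ] E) →ₗ[ℝ] (E →ₗ[ℝ] V) where
  toFun := LinearMap.adjoint
  map_add' f g := map_add _ f g
  map_smul' c f := by simp

/-- matrix entry of a linear map, as a linear functional -/
def entryLM {V : Type*} [AddCommGroup V] [Module ℝ V] {d : ℕ} (b : Module.Basis (Fin d) ℝ V)
    (i j : Fin d) : (V →ₗ[ℝ] V) →ₗ[ℝ] ℝ where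
  toFun g := LinearMap.toMatrix b b g i j
  map_add' f g := by simp
  map_smul' c f := by simp

end MainAux2


/-- Existence of compatibility conditions: if `A(D)` is injectively elliptic of order `k ≥ 1`
from `V` to `E`, there is a homogeneous constant-coefficient operator `L(D)` of some order
`m ≥ 1` from `E` to `E` whose symbol satisfies `ker L(ξ) = A(ξ)[V]` for all `ξ ≠ 0`. -/
theorem stmt4 {n k : ℕ} (hn : 1 ≤ n) (hk : 1 ≤ k)
    {V E : Type*} [NormedAddCommGroup V] [InnerProductSpace ℝ V] [FiniteDimensional ℝ V]
    [NormedAddCommGroup E] [InnerProductSpace ℝ E] [FiniteDimensional ℝ E]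
    (A : ContinuousMultilinearMap ℝ (fun _ : Fin k => EuclideanSpace ℝ (Fin n)) V →ₗ[ℝ] E)
    (hA : ∀ ξ : EuclideanSpace ℝ (Fin n), ξ ≠ 0 → LinearMap.ker (symbol A ξ) = ⊥) :
    ∃ (m : ℕ), 1 ≤ m ∧
      ∃ L : ContinuousMultilinearMap ℝ (fun _ : Fin m => EuclideanSpace ℝ (Fin n)) E →ₗ[ℝ] E,
        ∀ ξ : EuclideanSpace ℝ (Fin n), ξ ≠ 0 →
          LinearMap.range (symbol A ξ) = LinearMap.ker (symbol L ξ) := by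
  classical
  rcases Nat.eq_zero_or_pos (Module.finrank ℝ V) with hd | hd
  · -- trivial V
    have hΦ : (fun ξ => nsqFn n ξ • (LinearMap.id : E →ₗ[ℝ] E)) ∈ Qp n 2 (E →ₗ[ℝ] E) :=
      Qp_cast (by omega) (Qp_smul nsqFn_mem (Qp_const _))
    obtain ⟨L, hL⟩ := represent hΦ
    refine ⟨2, one_le_two, L, fun ξ hξ => ?_⟩
    have hsub : Subsingleton V := Module.finrank_zero_iff.mp hd
    rw [hL ξ]
    have h1 : LinearMap.range (symbol A ξ) = ⊥ := by
      rw [LinearMap.range_eq_bot]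
      apply LinearMap.ext; intro v
      rw [Subsingleton.elim v 0]; simp
    have h2 : LinearMap.ker (nsqFn n ξ • (LinearMap.id : E →ₗ[ℝ] E)) = ⊥ := by
      rw [LinearMap.ker_eq_bot']
      intro e he
      have := smul_eq_zero.mp he
      rcases this with h | h
      · exact absurd h (nsqFn_ne_zero hξ)
      · exact h
    rw [h1, h2]
  · obtain ⟨d', hd'⟩ : ∃ d', Module.finrank ℝ V = d' + 1 :=
      ⟨Module.finrank ℝ V - 1, by omega⟩
    let b : Module.Basis (Fin (Module.finrank ℝ V)) ℝ V := Module.finBasis ℝ V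
    -- memberships
    have memB : (fun ξ : EuclideanSpace ℝ (Fin n) => symbol A ξ) ∈ Qp n k (V →ₗ[ℝ] E) :=
      symbol_mem A
    have memBa : (fun ξ : EuclideanSpace ℝ (Fin n) => LinearMap.adjoint (symbol A ξ))
        ∈ Qp n k (E →ₗ[ℝ] V) := Qp_map adjLM memB
    have memG : (fun ξ : EuclideanSpace ℝ (Fin n) =>
        LinearMap.adjoint (symbol A ξ) ∘ₗ symbol A ξ) ∈ Qp n (k + k) (V →ₗ[ℝ] V) :=
      Qp_comp memBa memB
    have memEnt : ∀ i j, (fun ξ : EuclideanSpace ℝ (Fin n) =>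
        LinearMap.toMatrix b b (LinearMap.adjoint (symbol A ξ) ∘ₗ symbol A ξ) i j)
        ∈ Qp n (k + k) ℝ := fun i j => Qp_map (entryLM b i j) memG
    have memAdj : ∀ i j, (fun ξ : EuclideanSpace ℝ (Fin n) =>
        Matrix.adjugate (LinearMap.toMatrix b b (LinearMap.adjoint (symbol A ξ) ∘ₗ symbol A ξ)) i j)
        ∈ Qp n (d' * (k + k)) ℝ := by
      intro i j
      have hrw : (fun ξ : EuclideanSpace ℝ (Fin n) =>
          Matrix.adjugate (LinearMap.toMatrix b b (LinearMap.adjoint (symbol A ξ) ∘ₗ symbol A ξ)) i j)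
          = fun ξ => ∑ σ : Equiv.Perm (Fin (Module.finrank ℝ V)),
              (((Equiv.Perm.sign σ : ℤˣ) : ℤ) : ℝ) *
              ∏ l, ((LinearMap.toMatrix b b (LinearMap.adjoint (symbol A ξ) ∘ₗ symbol A ξ)).updateRow
                j (Pi.single i 1)) (σ l) l :=
        funext fun ξ => by rw [Matrix.adjugate_apply, Matrix.det_apply']
      rw [hrw]
      apply Qp_sum
      intro σ _
      have hcard : (Finset.univ.erase (σ⁻¹ j)).card = d' := by
        rw [Finset.card_erase_of_mem (Finset.mem_univ _), Finset.card_univ, Fintype.card_fin, hd']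
        omega
      have hP : (fun ξ : EuclideanSpace ℝ (Fin n) => ∏ l ∈ Finset.univ.erase (σ⁻¹ j),
          LinearMap.toMatrix b b (LinearMap.adjoint (symbol A ξ) ∘ₗ symbol A ξ) (σ l) l)
          ∈ Qp n (d' * (k + k)) ℝ := by
        refine Qp_cast ?_ (Qp_prod (Finset.univ.erase (σ⁻¹ j)) _ (fun _ => k + k)
          (fun l _ => memEnt (σ l) l))
        rw [Finset.sum_const, hcard, smul_eq_mul]
      have hfun : (fun ξ : EuclideanSpace ℝ (Fin n) =>
          (((Equiv.Perm.sign σ : ℤˣ) : ℤ) : ℝ) *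
          ∏ l, ((LinearMap.toMatrix b b (LinearMap.adjoint (symbol A ξ) ∘ₗ symbol A ξ)).updateRow
            j (Pi.single i 1)) (σ l) l)
          = ((((Equiv.Perm.sign σ : ℤˣ) : ℤ) : ℝ) * Pi.single (M := fun _ => ℝ) i 1 (σ⁻¹ j)) •
            (fun ξ : EuclideanSpace ℝ (Fin n) => ∏ l ∈ Finset.univ.erase (σ⁻¹ j),
              LinearMap.toMatrix b b (LinearMap.adjoint (symbol A ξ) ∘ₗ symbol A ξ) (σ l) l) := by
        funext ξ
        rw [← Finset.mul_prod_erase Finset.univ _ (Finset.mem_univ (σ⁻¹ j))]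
        have h1 : ((LinearMap.toMatrix b b (LinearMap.adjoint (symbol A ξ) ∘ₗ symbol A ξ)).updateRow
            j (Pi.single i 1)) (σ (σ⁻¹ j)) (σ⁻¹ j) = Pi.single (M := fun _ => ℝ) i 1 (σ⁻¹ j) := by
          rw [Matrix.updateRow_apply, if_pos (show σ (σ⁻¹ j) = j from Equiv.apply_symm_apply σ j)]
        have h2 : ∀ l ∈ Finset.univ.erase (σ⁻¹ j),
            ((LinearMap.toMatrix b b (LinearMap.adjoint (symbol A ξ) ∘ₗ symbol A ξ)).updateRow
              j (Pi.single i 1)) (σ l) l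
            = LinearMap.toMatrix b b (LinearMap.adjoint (symbol A ξ) ∘ₗ symbol A ξ) (σ l) l := by
          intro l hl
          rw [Matrix.updateRow_apply, if_neg]
          intro h
          exact (Finset.mem_erase.mp hl).1 (by rw [← h]; exact (Equiv.symm_apply_apply σ l).symm)
        rw [h1, Finset.prod_congr rfl h2]
        simp [mul_assoc]
      rw [hfun]
      exact Submodule.smul_mem _ _ hP
    have memJ : (fun ξ : EuclideanSpace ℝ (Fin n) => Matrix.toLin b b
        (Matrix.adjugate (LinearMap.toMatrix b b (LinearMap.adjoint (symbol A ξ) ∘ₗ symbol A ξ))))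
        ∈ Qp n (d' * (k + k)) (V →ₗ[ℝ] V) := by
      have hrw : (fun ξ : EuclideanSpace ℝ (Fin n) => Matrix.toLin b b
          (Matrix.adjugate (LinearMap.toMatrix b b (LinearMap.adjoint (symbol A ξ) ∘ₗ symbol A ξ))))
          = fun ξ => ∑ i, ∑ j,
              Matrix.adjugate (LinearMap.toMatrix b b
                (LinearMap.adjoint (symbol A ξ) ∘ₗ symbol A ξ)) i j •
              Matrix.toLin b b (Matrix.single i j (1:ℝ)) := by
        funext ξ
        conv_lhs => rw [Matrix.matrix_eq_sum_single
          (Matrix.adjugate (LinearMap.toMatrix b b (LinearMap.adjoint (symbol A ξ) ∘ₗ symbol A ξ)))]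
        rw [map_sum]
        refine Finset.sum_congr rfl fun i _ => ?_
        rw [map_sum]
        refine Finset.sum_congr rfl fun j _ => ?_
        rw [← _root_.map_smul]
        congr 1
        rw [Matrix.smul_single, smul_eq_mul, mul_one]
      rw [hrw]
      refine Qp_sum _ _ _ fun i _ => Qp_sum _ _ _ fun j _ => ?_
      exact Qp_cast (by omega) (Qp_smul (memAdj i j) (Qp_const _))
    have memdet : (fun ξ : EuclideanSpace ℝ (Fin n) =>
        (LinearMap.toMatrix b b (LinearMap.adjoint (symbol A ξ) ∘ₗ symbol A ξ)).det)
        ∈ Qp n (Module.finrank ℝ V * (k + k)) ℝ := by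
      have hrw : (fun ξ : EuclideanSpace ℝ (Fin n) =>
          (LinearMap.toMatrix b b (LinearMap.adjoint (symbol A ξ) ∘ₗ symbol A ξ)).det)
          = fun ξ => ∑ σ : Equiv.Perm (Fin (Module.finrank ℝ V)),
              (((Equiv.Perm.sign σ : ℤˣ) : ℤ) : ℝ) *
              ∏ l, LinearMap.toMatrix b b (LinearMap.adjoint (symbol A ξ) ∘ₗ symbol A ξ) (σ l) l :=
        funext fun ξ => by rw [Matrix.det_apply']
      rw [hrw]
      apply Qp_sum
      intro σ _
      have hP : (fun ξ : EuclideanSpace ℝ (Fin n) => ∏ l,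
          LinearMap.toMatrix b b (LinearMap.adjoint (symbol A ξ) ∘ₗ symbol A ξ) (σ l) l)
          ∈ Qp n (Module.finrank ℝ V * (k + k)) ℝ := by
        refine Qp_cast ?_ (Qp_prod Finset.univ _ (fun _ => k + k) (fun l _ => memEnt (σ l) l))
        rw [Finset.sum_const, Finset.card_univ, Fintype.card_fin, smul_eq_mul]
      exact Submodule.smul_mem _ _ hP
    have memX : (fun ξ : EuclideanSpace ℝ (Fin n) =>
        (LinearMap.toMatrix b b (LinearMap.adjoint (symbol A ξ) ∘ₗ symbol A ξ)).det •
          (LinearMap.id : E →ₗ[ℝ] E)) ∈ Qp n (Module.finrank ℝ V * (k + k)) (E →ₗ[ℝ] E) :=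
      Qp_cast (by omega) (Qp_smul memdet (Qp_const (LinearMap.id : E →ₗ[ℝ] E)))
    have memY : (fun ξ : EuclideanSpace ℝ (Fin n) =>
        symbol A ξ ∘ₗ (Matrix.toLin b b (Matrix.adjugate (LinearMap.toMatrix b b
          (LinearMap.adjoint (symbol A ξ) ∘ₗ symbol A ξ))) ∘ₗ LinearMap.adjoint (symbol A ξ)))
        ∈ Qp n (Module.finrank ℝ V * (k + k)) (E →ₗ[ℝ] E) :=
      Qp_cast (by rw [hd']; ring) (Qp_comp memB (Qp_comp memJ memBa))
    have memPhi : (fun ξ : EuclideanSpace ℝ (Fin n) => nsqFn n ξ •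
        ((LinearMap.toMatrix b b (LinearMap.adjoint (symbol A ξ) ∘ₗ symbol A ξ)).det •
          (LinearMap.id : E →ₗ[ℝ] E) -
        symbol A ξ ∘ₗ (Matrix.toLin b b (Matrix.adjugate (LinearMap.toMatrix b b
          (LinearMap.adjoint (symbol A ξ) ∘ₗ symbol A ξ))) ∘ₗ LinearMap.adjoint (symbol A ξ))))
        ∈ Qp n (2 + Module.finrank ℝ V * (k + k)) (E →ₗ[ℝ] E) :=
      Qp_smul nsqFn_mem (Qp_sub memX memY)
    obtain ⟨L, hL⟩ := represent memPhi
    refine ⟨2 + Module.finrank ℝ V * (k + k), by omega, L, fun ξ hξ => ?_⟩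
    set B : V →ₗ[ℝ] E := symbol A ξ with hBdef
    set Ba : E →ₗ[ℝ] V := LinearMap.adjoint B with hBadef
    set G : V →ₗ[ℝ] V := Ba ∘ₗ B with hGdef
    set M : Matrix (Fin (Module.finrank ℝ V)) (Fin (Module.finrank ℝ V)) ℝ :=
      LinearMap.toMatrix b b G with hMdef
    set J : V →ₗ[ℝ] V := Matrix.toLin b b (Matrix.adjugate M) with hJdef
    have hkerB : LinearMap.ker B = ⊥ := hA ξ hξ
    have hBinj : Function.Injective B := LinearMap.ker_eq_bot.mp hkerB
    have hkerG : LinearMap.ker G = ⊥ := by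
      rw [LinearMap.ker_eq_bot']
      intro v hv
      have h1 : (inner ℝ (B v) (B v) : ℝ) = 0 := by
        have h2 : (inner ℝ (LinearMap.adjoint B (B v)) v : ℝ) = inner ℝ (B v) (B v) :=
          LinearMap.adjoint_inner_left B v (B v)
        have h3 : LinearMap.adjoint B (B v) = 0 := hv
        rw [h3] at h2
        simpa using h2.symm
      have h4 : B v = 0 := inner_self_eq_zero.mp h1
      exact hBinj (by simpa using h4)
    have hGunit : IsUnit G := (LinearMap.isUnit_iff_ker_eq_bot _).mpr hkerG
    have hdetne : M.det ≠ 0 := by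
      rw [hMdef, LinearMap.det_toMatrix]
      exact (hGunit.map LinearMap.det).ne_zero
    have hJG : J ∘ₗ G = M.det • LinearMap.id := by
      have h1 : G = Matrix.toLin b b M := (Matrix.toLin_toMatrix b b G).symm
      calc J ∘ₗ G = Matrix.toLin b b (Matrix.adjugate M * M) := by
            rw [Matrix.toLin_mul b b b, ← h1, hJdef]
        _ = Matrix.toLin b b (M.det • 1) := by rw [Matrix.adjugate_mul]
        _ = M.det • LinearMap.id := by rw [_root_.map_smul, Matrix.toLin_one]
    have hPhi : symbol L ξ
        = nsqFn n ξ • (M.det • (LinearMap.id : E →ₗ[ℝ] E) - B ∘ₗ (J ∘ₗ Ba)) := hL ξ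
    rw [hPhi]
    ext e
    simp only [LinearMap.mem_range, LinearMap.mem_ker, LinearMap.smul_apply, LinearMap.sub_apply,
      LinearMap.id_apply, LinearMap.comp_apply]
    constructor
    · rintro ⟨w, rfl⟩
      have h6 : J (G w) = M.det • w := by simpa using LinearMap.congr_fun hJG w
      rw [show Ba (B w) = G w from rfl, h6, _root_.map_smul, sub_self, smul_zero]
    · intro he
      rcases smul_eq_zero.mp he with h | h
      · exact absurd h (nsqFn_ne_zero hξ)
      · have h8 : B (J (Ba e)) = M.det • e := (sub_eq_zero.mp h).symm
        exact ⟨M.det⁻¹ • J (Ba e),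
          by rw [_root_.map_smul, h8, smul_smul, inv_mul_cancel₀ hdetne, one_smul]⟩
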